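/- For every base a ≥ 1, the series ∑_{k=1}^∞ 1/e(a,k) converges, where e(a,0) = a and e(a,k+1) = p_{e(a,k)} with p_m the m-th prime. -/
import Mathlib


open Nat

/-- The n-th prime number, 1-indexed: `nthPrime 1 = 2`. -/
noncomputable def nthPrime (n : ℕ) : ℕ := Nat.nth Nat.Prime (n - 1)


/-- The Eratosthenes progression of base `a`: `erat a 0 = a`,
`erat a (k+1) = nthPrime (erat a k)`. -/
noncomputable def erat (a : ℕ) : ℕ → ℕ
  | 0 => a
  | k + 1 => nthPrime (erat a k)

lemma nth_prime_prime (n : ℕ) : (Nat.nth Nat.Prime n).Prime :=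
  Nat.nth_mem_of_infinite Nat.infinite_setOf_prime n

lemma two_le_nth_prime (n : ℕ) : 2 ≤ Nat.nth Nat.Prime n :=
  (nth_prime_prime n).two_le

lemma nth_prime_ge (n : ℕ) (hn : 1 ≤ n) : 2 * n + 1 ≤ Nat.nth Nat.Prime n := by
  induction n with
  | zero => omega
  | succ m ih =>
    rcases Nat.eq_or_lt_of_le hn with h | h
    · have hm0 : m = 0 := by omega
      subst hm0
      have hc : Nat.count Nat.Prime 3 = 1 := by decide
      have h3 : Nat.nth Nat.Prime 1 = 3 := by
        have := Nat.nth_count (p := Nat.Prime) (n := 3) (by norm_num)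
        rwa [hc] at this
      have h3' : Nat.nth Nat.Prime (0 + 1) = 3 := h3
      omega
    · have hm : 1 ≤ m := by omega
      have hp : 2 * m + 1 ≤ Nat.nth Nat.Prime m := ih hm
      set p := Nat.nth Nat.Prime m with hpdef
      set q := Nat.nth Nat.Prime (m + 1) with hqdef
      have hlt : p < q :=
        (Nat.nth_lt_nth Nat.infinite_setOf_prime).mpr (Nat.lt_succ_self m)
      have hpodd : Odd p := (nth_prime_prime m).odd_of_ne_two (by omega)
      have hqprime : q.Prime := nth_prime_prime (m + 1)
      have hq2 : 2 < q := by
        have := two_le_nth_prime (m + 1); omega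
      have hqodd : Odd q := hqprime.odd_of_ne_two (by omega)
      have hne : q ≠ p + 1 := by
        intro h
        have : Even (p + 1) := by
          rcases hpodd with ⟨t, ht⟩
          exact ⟨t + 1, by omega⟩
        rw [h] at hqodd
        exact (Nat.not_even_iff_odd.mpr hqodd) this
      omega

lemma nthPrime_ge (m : ℕ) (hm : 2 ≤ m) : 2 * m - 1 ≤ nthPrime m := by
  have h1 : 1 ≤ m - 1 := by omega
  have := nth_prime_ge (m - 1) h1
  unfold nthPrime
  omega

lemma erat_ge (a : ℕ) (ha : 1 ≤ a) (k : ℕ) : 2 ^ k + 1 ≤ erat a (k + 1) := by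
  induction k with
  | zero =>
    have : 2 ≤ nthPrime a := two_le_nth_prime (a - 1)
    simpa [erat] using this
  | succ n ih =>
    have h2 : 2 ≤ erat a (n + 1) := by
      have : (1:ℕ) ≤ 2 ^ n := Nat.one_le_two_pow
      omega
    have := nthPrime_ge (erat a (n + 1)) h2
    have hpow : 2 ^ (n + 1) = 2 * 2 ^ n := by ring
    show 2 ^ (n + 1) + 1 ≤ nthPrime (erat a (n + 1))
    omega

theorem summable_inv_erat (a : ℕ) (ha : 1 ≤ a) :
    Summable (fun k : ℕ => (1 : ℝ) / erat a (k + 1)) := by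
  have hgeom : Summable (fun k : ℕ => ((1 : ℝ) / 2) ^ k) := by
    apply summable_geometric_of_lt_one <;> norm_num
  refine Summable.of_nonneg_of_le (fun k => ?_) (fun k => ?_) hgeom
  · positivity
  · have h := erat_ge a ha k
    have hpos : (0 : ℝ) < 2 ^ k := by positivity
    have hle : (2 : ℝ) ^ k ≤ (erat a (k + 1) : ℝ) := by
      have : ((2 ^ k : ℕ) : ℝ) ≤ (erat a (k + 1) : ℝ) := by
        exact_mod_cast Nat.le_of_lt (by omega)
      simpa using this
    rw [div_pow, one_pow]
    exact one_div_le_one_div_of_le hpos hle
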